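/- Suppose E, A, D₁, P : (0, r₀] → [0, ∞) satisfy, for all 0 < r ≤ ρ/4, the decay estimate D₁(r) ≤ C[(ρ/r) E(ρ)^{1/λ} A(ρ)^{1−1/λ} + (r/ρ)(E(ρ)^{1/2} + P(ρ))] with 1 < λ < 2, and the smallness bounds E(ρ) ≤ ε ρ^{2/3−γ}, A(ρ) ≤ ε ρ^{1/6−γ}, P(ρ) ≤ ε^{4/5} ρ^{1/3−4γ/5} hold for all ρ ≤ r₀. If γ ≤ min{5(3λ−1)/(18λ), 5(1+λ)/(12λ), 5(1+λ)/(18λ)} and θ = ρ^β with β = 1/(4λ) − 1/12 − γ/10 ∈ (0, 1), then E(θρ) + D₁(θρ) ≤ C' ε^{1/2} for all sufficiently small ρ > 0, with C' depending only on C and λ. -/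

import Mathlib

set_option maxHeartbeats 1000000

/-- Abstract concluding estimate of Proposition 2 (boundary box dimension ≤ 10/9):
from the decay estimate `D₁(r) ≤ C[(ρ/r)E(ρ)^{1/λ}A(ρ)^{1−1/λ} + (r/ρ)(E(ρ)^{1/2} + P(ρ))]`
and the smallness bounds, with `γ ≤ min{5(3λ−1)/(18λ), 5(1+λ)/(12λ), 5(1+λ)/(18λ)}` and
`θ = ρ^β`, `β = 1/(4λ) − 1/12 − γ/10 ∈ (0,1)`, it follows that
`E(θρ) + D₁(θρ) ≤ C' ε^{1/2}` for all sufficiently small `ρ`, with `C' = C'(C, λ)`. -/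
theorem stmt_17 (C lam : ℝ) (hC : 0 < C) (hlam1 : 1 < lam) (hlam2 : lam < 2) :
    ∃ C' : ℝ, 0 < C' ∧
      ∀ (E A D₁ P : ℝ → ℝ) (ε γ r₀ β : ℝ),
        0 < ε → ε ≤ 1 → 0 < γ → 0 < r₀ →
        β = 1 / (4 * lam) - 1 / 12 - γ / 10 → 0 < β → β < 1 →
        γ ≤ min (min (5 * (3 * lam - 1) / (18 * lam)) (5 * (1 + lam) / (12 * lam)))
            (5 * (1 + lam) / (18 * lam)) →
        (∀ r : ℝ, 0 ≤ E r ∧ 0 ≤ A r ∧ 0 ≤ D₁ r ∧ 0 ≤ P r) →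
        (∀ r ρ : ℝ, 0 < r → r ≤ ρ / 4 → ρ ≤ r₀ →
          D₁ r ≤ C * ((ρ / r) * (E ρ) ^ (1 / lam) * (A ρ) ^ (1 - 1 / lam) +
            (r / ρ) * ((E ρ) ^ ((1 : ℝ) / 2) + P ρ))) →
        (∀ ρ : ℝ, 0 < ρ → ρ ≤ r₀ → E ρ ≤ ε * ρ ^ (2 / 3 - γ)) →
        (∀ ρ : ℝ, 0 < ρ → ρ ≤ r₀ → A ρ ≤ ε * ρ ^ (1 / 6 - γ)) →
        (∀ ρ : ℝ, 0 < ρ → ρ ≤ r₀ → P ρ ≤ ε ^ ((4 : ℝ) / 5) * ρ ^ (1 / 3 - 4 * γ / 5)) →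
        ∃ ρ₁ : ℝ, 0 < ρ₁ ∧ ∀ ρ : ℝ, 0 < ρ → ρ ≤ ρ₁ →
          E (ρ ^ β * ρ) + D₁ (ρ ^ β * ρ) ≤ C' * ε ^ ((1 : ℝ) / 2) := by
  have hlam0 : (0:ℝ) < lam := by linarith
  refine ⟨1 + 3 * C, by positivity, ?_⟩
  intro E A D₁ P ε γ r₀ β hε hε1 hγ hr₀ hβdef hβ0 hβ1 hγmin hnn hdecay hE hA hP
  -- basic facts about exponents
  have hinv0 : (0:ℝ) < 1 / lam := by positivity
  have hinv1 : 1 / lam < 1 := by rw [div_lt_one hlam0]; exact hlam1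
  have hidem : lam * (1 / lam) = 1 := by field_simp
  have hγ' : γ * (18 * lam) ≤ 5 * (1 + lam) := by
    have h := le_trans hγmin (min_le_right _ _)
    rw [le_div_iff₀ (by positivity)] at h
    linarith
  have hγ59 : γ ≤ 5 / 9 := by nlinarith
  have he1 : 0 ≤ 1 / 4 + (1 / lam) / 4 - 9 * γ / 10 := by nlinarith
  refine ⟨min r₀ (min 1 ((4:ℝ)⁻¹ ^ (1 / β))), by positivity, ?_⟩
  intro ρ hρ hρ₁
  have hρr₀ : ρ ≤ r₀ := le_trans hρ₁ (min_le_left _ _)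
  have hρ1 : ρ ≤ 1 := le_trans hρ₁ (le_trans (min_le_right _ _) (min_le_left _ _))
  have hθ4 : ρ ^ β ≤ 4⁻¹ := by
    have h := Real.rpow_le_rpow hρ.le
      (le_trans hρ₁ (le_trans (min_le_right _ _) (min_le_right _ _))) hβ0.le
    rwa [← Real.rpow_mul (by norm_num), one_div_mul_cancel (ne_of_gt hβ0),
      Real.rpow_one] at h
  have hθ0 : (0:ℝ) < ρ ^ β := Real.rpow_pos_of_pos hρ β
  set t := ρ ^ β * ρ with ht
  have ht0 : 0 < t := by positivity
  have ht4 : t ≤ ρ / 4 := by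
    have := mul_le_mul_of_nonneg_right hθ4 hρ.le
    linarith
  have htr₀ : t ≤ r₀ := by linarith
  have ht1 : t ≤ 1 := by linarith
  -- ε^a ≤ ε^(1/2) for a ≥ 1/2
  have hεhalf : ∀ a : ℝ, 1/2 ≤ a → ε ^ a ≤ ε ^ ((1:ℝ)/2) :=
    fun a ha => Real.rpow_le_rpow_of_exponent_ge hε hε1 ha
  have hε12 : ε ≤ ε ^ ((1:ℝ)/2) := by
    have := hεhalf 1 (by norm_num)
    rwa [Real.rpow_one] at this
  -- rpow of ρ with nonneg exponent is ≤ 1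
  have hρle1 : ∀ a : ℝ, 0 ≤ a → ρ ^ a ≤ 1 := fun a ha => Real.rpow_le_one hρ.le hρ1 ha
  -- Bound E t
  have hEt : E t ≤ ε ^ ((1:ℝ)/2) := by
    have h1 := hE t ht0 htr₀
    have h2 : t ^ (2/3 - γ) ≤ 1 := Real.rpow_le_one ht0.le ht1 (by linarith)
    calc E t ≤ ε * t ^ (2/3 - γ) := h1
      _ ≤ ε * 1 := by nlinarith
      _ ≤ ε ^ ((1:ℝ)/2) := by rw [mul_one]; exact hε12
  -- Bound D₁ t
  have hD := hdecay t ρ ht0 ht4 hρr₀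
  have hEρ := hE ρ hρ hρr₀
  have hAρ := hA ρ hρ hρr₀
  have hPρ := hP ρ hρ hρr₀
  have hEρ0 := (hnn ρ).1
  have hAρ0 := (hnn ρ).2.1
  have hPρ0 := (hnn ρ).2.2.2
  have hρt : ρ / t = ρ ^ (-β) := by
    rw [ht, Real.rpow_neg hρ.le]
    field_simp
  have htρ : t / ρ = ρ ^ β := by
    rw [ht]; field_simp
  -- Term 1
  have hT1 : (ρ / t) * (E ρ) ^ (1 / lam) * (A ρ) ^ (1 - 1 / lam) ≤ ε ^ ((1:ℝ)/2) := by
    have h1 : (E ρ) ^ (1 / lam) ≤ ε ^ (1 / lam) * ρ ^ ((2/3 - γ) * (1 / lam)) := by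
      calc (E ρ) ^ (1 / lam) ≤ (ε * ρ ^ (2/3 - γ)) ^ (1 / lam) :=
            Real.rpow_le_rpow hEρ0 hEρ hinv0.le
        _ = ε ^ (1 / lam) * ρ ^ ((2/3 - γ) * (1 / lam)) := by
            rw [Real.mul_rpow hε.le (by positivity), ← Real.rpow_mul hρ.le]
    have h2 : (A ρ) ^ (1 - 1 / lam) ≤ ε ^ (1 - 1 / lam) * ρ ^ ((1/6 - γ) * (1 - 1 / lam)) := by
      calc (A ρ) ^ (1 - 1 / lam) ≤ (ε * ρ ^ (1/6 - γ)) ^ (1 - 1 / lam) :=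
            Real.rpow_le_rpow hAρ0 hAρ (by linarith)
        _ = _ := by
            rw [Real.mul_rpow hε.le (by positivity), ← Real.rpow_mul hρ.le]
    calc (ρ / t) * (E ρ) ^ (1 / lam) * (A ρ) ^ (1 - 1 / lam)
        ≤ ρ ^ (-β) * (ε ^ (1 / lam) * ρ ^ ((2/3 - γ) * (1 / lam))) *
          (ε ^ (1 - 1 / lam) * ρ ^ ((1/6 - γ) * (1 - 1 / lam))) := by
          rw [hρt]
          have hb2 : (0:ℝ) ≤ (A ρ) ^ (1 - 1 / lam) := Real.rpow_nonneg hAρ0 _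
          exact mul_le_mul (mul_le_mul_of_nonneg_left h1 (Real.rpow_nonneg hρ.le _)) h2
            hb2 (by positivity)
      _ = ε ^ ((1 / lam) + (1 - 1 / lam)) *
          ρ ^ (-β + (2/3 - γ) * (1 / lam) + (1/6 - γ) * (1 - 1 / lam)) := by
          rw [Real.rpow_add hε, Real.rpow_add hρ, Real.rpow_add hρ]; ring
      _ ≤ ε ^ ((1:ℝ)/2) * 1 := by
          have he : (1 / lam) + (1 - 1 / lam) = 1 := by ring
          rw [he, Real.rpow_one]
          have hexp : 0 ≤ -β + (2/3 - γ) * (1 / lam) + (1/6 - γ) * (1 - 1 / lam) := by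
            rw [hβdef]
            have h14 : 1 / (4 * lam) = (1 / lam) / 4 := by field_simp
            rw [h14]; nlinarith
          exact mul_le_mul hε12 (hρle1 _ hexp) (by positivity) (by positivity)
      _ = ε ^ ((1:ℝ)/2) := mul_one _
  -- Term 2a
  have hT2a : (t / ρ) * (E ρ) ^ ((1:ℝ)/2) ≤ ε ^ ((1:ℝ)/2) := by
    have h1 : (E ρ) ^ ((1:ℝ)/2) ≤ ε ^ ((1:ℝ)/2) * ρ ^ ((2/3 - γ) * (1/2)) := by
      calc (E ρ) ^ ((1:ℝ)/2) ≤ (ε * ρ ^ (2/3 - γ)) ^ ((1:ℝ)/2) :=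
            Real.rpow_le_rpow hEρ0 hEρ (by norm_num)
        _ = _ := by rw [Real.mul_rpow hε.le (by positivity), ← Real.rpow_mul hρ.le]
    calc (t / ρ) * (E ρ) ^ ((1:ℝ)/2)
        ≤ ρ ^ β * (ε ^ ((1:ℝ)/2) * ρ ^ ((2/3 - γ) * (1/2))) := by
          rw [htρ]
          exact mul_le_mul_of_nonneg_left h1 hθ0.le
      _ = ε ^ ((1:ℝ)/2) * ρ ^ (β + (2/3 - γ) * (1/2)) := by
          rw [Real.rpow_add hρ]; ring
      _ ≤ ε ^ ((1:ℝ)/2) * 1 := by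
          have hexp : 0 ≤ β + (2/3 - γ) * (1/2) := by nlinarith
          exact mul_le_mul_of_nonneg_left (hρle1 _ hexp) (by positivity)
      _ = ε ^ ((1:ℝ)/2) := mul_one _
  -- Term 2b
  have hT2b : (t / ρ) * P ρ ≤ ε ^ ((1:ℝ)/2) := by
    calc (t / ρ) * P ρ ≤ ρ ^ β * (ε ^ ((4:ℝ)/5) * ρ ^ (1/3 - 4 * γ / 5)) := by
          rw [htρ]
          exact mul_le_mul_of_nonneg_left hPρ hθ0.le
      _ = ε ^ ((4:ℝ)/5) * ρ ^ (β + (1/3 - 4 * γ / 5)) := by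
          rw [Real.rpow_add hρ]; ring
      _ ≤ ε ^ ((1:ℝ)/2) * 1 := by
          have hexp : 0 ≤ β + (1/3 - 4 * γ / 5) := by
            rw [hβdef]
            have h14 : 1 / (4 * lam) = (1 / lam) / 4 := by field_simp
            rw [h14]; nlinarith
          exact mul_le_mul (hεhalf _ (by norm_num)) (hρle1 _ hexp) (by positivity)
            (by positivity)
      _ = ε ^ ((1:ℝ)/2) := mul_one _
  have hDt : D₁ t ≤ 3 * C * ε ^ ((1:ℝ)/2) := by
    calc D₁ t ≤ C * ((ρ / t) * (E ρ) ^ (1 / lam) * (A ρ) ^ (1 - 1 / lam) +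
        (t / ρ) * ((E ρ) ^ ((1:ℝ)/2) + P ρ)) := hD
      _ ≤ C * (ε ^ ((1:ℝ)/2) + (ε ^ ((1:ℝ)/2) + ε ^ ((1:ℝ)/2))) := by
          have : (t / ρ) * ((E ρ) ^ ((1:ℝ)/2) + P ρ) =
              (t / ρ) * (E ρ) ^ ((1:ℝ)/2) + (t / ρ) * P ρ := by ring
          rw [this]
          have := add_le_add hT1 (add_le_add hT2a hT2b)
          exact mul_le_mul_of_nonneg_left this hC.le
      _ = 3 * C * ε ^ ((1:ℝ)/2) := by ring
  calc E t + D₁ t ≤ ε ^ ((1:ℝ)/2) + 3 * C * ε ^ ((1:ℝ)/2) := add_le_add hEt hDt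
    _ = (1 + 3 * C) * ε ^ ((1:ℝ)/2) := by ring
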